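/- Let (u_k), (a_k) be nonnegative sequences and (S_k) nondecreasing with S_0 ≥ u_0², satisfying u_k² ≤ S_k + Σ_{i=1}^{k} a_i u_i for all k. Then S_k + Σ_{i=1}^{k} a_i u_i ≤ (sqrt(S_k) + Σ_{i=1}^{k} a_i)². -/

import Mathlib

open Finset

theorem nonneg_sequence_sum_bound
    (u a S : ℕ → ℝ)
    (hu : ∀ k, 0 ≤ u k) (ha : ∀ k, 0 ≤ a k)
    (hS : Monotone S) (hS0 : u 0 ^ 2 ≤ S 0)
    (hrec : ∀ k, u k ^ 2 ≤ S k + ∑ i ∈ Finset.Icc 1 k, a i * u i) :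
    ∀ k, S k + ∑ i ∈ Finset.Icc 1 k, a i * u i ≤
      (Real.sqrt (S k) + ∑ i ∈ Finset.Icc 1 k, a i) ^ 2 := by
  have hS0' : (0:ℝ) ≤ S 0 := le_trans (sq_nonneg _) hS0
  have hSnn : ∀ k, (0:ℝ) ≤ S k := fun k => le_trans hS0' (hS (Nat.zero_le k))
  -- key lemma: u k ≤ sqrt (S k) + ∑ a i
  have key : ∀ k, u k ≤ Real.sqrt (S k) + ∑ i ∈ Finset.Icc 1 k, a i := by
    intro k
    induction k using Nat.strong_induction_on with
    | _ k ih =>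
      match k with
      | 0 =>
        simp only [Finset.Icc_self, Finset.Icc_eq_empty_of_lt (by norm_num : (1:ℕ) > 0),
          Finset.sum_empty, add_zero]
        calc u 0 = Real.sqrt ((u 0)^2) := by rw [Real.sqrt_sq (hu 0)]
        _ ≤ Real.sqrt (S 0) := Real.sqrt_le_sqrt hS0
      | n + 1 =>
        set B := Real.sqrt (S (n+1)) + ∑ i ∈ Finset.Icc 1 (n+1), a i with hB
        by_contra hcon
        push_neg at hcon
        have hsqnn : (0:ℝ) ≤ Real.sqrt (S (n+1)) := Real.sqrt_nonneg _
        have hsq : Real.sqrt (S (n+1)) ^ 2 = S (n+1) := Real.sq_sqrt (hSnn _)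
        have hAnn : (0:ℝ) ≤ ∑ i ∈ Finset.Icc 1 n, a i :=
          Finset.sum_nonneg fun i _ => ha i
        have hBi : ∀ i ∈ Finset.Icc 1 n, u i ≤ B := by
          intro i hi
          rw [Finset.mem_Icc] at hi
          calc u i ≤ Real.sqrt (S i) + ∑ j ∈ Finset.Icc 1 i, a j :=
                ih i (Nat.lt_succ_of_le hi.2)
          _ ≤ B := by
                apply add_le_add
                · exact Real.sqrt_le_sqrt (hS (Nat.le_succ_of_le hi.2))
                · exact Finset.sum_le_sum_of_subset_of_nonneg
                    (Finset.Icc_subset_Icc_right (Nat.le_succ_of_le hi.2))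
                    (fun j _ _ => ha j)
        have hsum : ∑ i ∈ Finset.Icc 1 n, a i * u i ≤
            (∑ i ∈ Finset.Icc 1 n, a i) * B := by
          rw [Finset.sum_mul]
          exact Finset.sum_le_sum fun i hi =>
            mul_le_mul_of_nonneg_left (hBi i hi) (ha i)
        have hsplit : ∑ i ∈ Finset.Icc 1 (n+1), a i * u i =
            (∑ i ∈ Finset.Icc 1 n, a i * u i) + a (n+1) * u (n+1) := by
          rw [Finset.sum_Icc_succ_top (Nat.one_le_iff_ne_zero.mpr (Nat.succ_ne_zero n))]
        have hAsplit : ∑ i ∈ Finset.Icc 1 (n+1), a i =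
            (∑ i ∈ Finset.Icc 1 n, a i) + a (n+1) := by
          rw [Finset.sum_Icc_succ_top (Nat.one_le_iff_ne_zero.mpr (Nat.succ_ne_zero n))]
        have hrec' := hrec (n+1)
        rw [hsplit] at hrec'
        have hBdef : B = Real.sqrt (S (n+1)) + ((∑ i ∈ Finset.Icc 1 n, a i) + a (n+1)) := by
          rw [hB, hAsplit]
        have hBc : a (n+1) ≤ B := by
          rw [hBdef]; linarith [ha (n+1)]
        have hBnn : (0:ℝ) ≤ B := le_trans (ha (n+1)) hBc
        have hpos : 0 < u (n+1) + B - a (n+1) := by linarith [hu (n+1)]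
        have hsB : Real.sqrt (S (n+1)) ≤ B := by
          rw [hBdef]; linarith [ha (n+1)]
        have hid : B^2 = B * Real.sqrt (S (n+1)) + B * (∑ i ∈ Finset.Icc 1 n, a i)
            + B * a (n+1) := by rw [hBdef]; ring
        nlinarith [mul_pos (sub_pos.mpr hcon) hpos,
          mul_le_mul_of_nonneg_left hsB hsqnn, hsq,
          mul_le_mul_of_nonneg_left hsB hAnn]
  intro k
  have hsqnn : (0:ℝ) ≤ Real.sqrt (S k) := Real.sqrt_nonneg _
  have hsq : Real.sqrt (S k) ^ 2 = S k := Real.sq_sqrt (hSnn k)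
  have hAnn : (0:ℝ) ≤ ∑ i ∈ Finset.Icc 1 k, a i := Finset.sum_nonneg fun i _ => ha i
  have hsum : ∑ i ∈ Finset.Icc 1 k, a i * u i ≤
      (∑ i ∈ Finset.Icc 1 k, a i) * (Real.sqrt (S k) + ∑ i ∈ Finset.Icc 1 k, a i) := by
    rw [Finset.sum_mul]
    apply Finset.sum_le_sum
    intro i hi
    rw [Finset.mem_Icc] at hi
    apply mul_le_mul_of_nonneg_left _ (ha i)
    calc u i ≤ Real.sqrt (S i) + ∑ j ∈ Finset.Icc 1 i, a j := key i
    _ ≤ _ := add_le_add (Real.sqrt_le_sqrt (hS hi.2))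
          (Finset.sum_le_sum_of_subset_of_nonneg
            (Finset.Icc_subset_Icc_right hi.2) (fun j _ _ => ha j))
  nlinarith
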